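/- arXiv:2511.15326 — 2 statements merged into one kernel-verified Lean document; each statement's English description precedes it below -/
import Mathlib

section
/- For every D >= 1 there exists an RNN R = Q∘K with input dimension 2, output dimension 1, and hidden state size 14 such that for all x = (x_1, x_2) ∈ [-D, D]^2 and all t ∈ ℕ₀: |(R D x)[t] - x_1·x_2| <= (D^2/2) * 4^{-t}, ‖(K D x)[t]‖_∞ <= 1, and |(R D x)[t]| <= D^2. -/
/-- ReLU applied componentwise. -/
noncomputable def relu {n : Type*} (v : n → ℝ) : n → ℝ := fun i => max 0 (v i)

/-- An RNN with input index type `ι`, hidden state index type `κ`, output index type `ω`,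
parametrized by weights `A_h, A_x, A_o, b_h, b_o`. -/
structure RNN (ι κ ω : Type) where
  Ah : Matrix κ κ ℝ
  Ax : Matrix κ ι ℝ
  Ao : Matrix ω κ ℝ
  bh : κ → ℝ
  bo : ω → ℝ

/-- Hidden state sequence `(K 𝒟 x)[t]` for the input sequence `(𝒟 x)[t] = x·1{t=0}`,
with the convention `h[-1] = 0`:  `h[0] = ρ(A_x x + b_h)`, `h[t+1] = ρ(A_h h[t] + b_h)`. -/
noncomputable def RNN.hid {ι κ ω : Type} [Fintype ι] [Fintype κ] (R : RNN ι κ ω)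
    (x : ι → ℝ) : ℕ → κ → ℝ
  | 0 => relu (R.Ax.mulVec x + R.bh)
  | t + 1 => relu (R.Ah.mulVec (RNN.hid R x t) + R.bh)

/-- Output sequence `(R 𝒟 x)[t] = A_o h[t] + b_o`. -/
noncomputable def RNN.out {ι κ ω : Type} [Fintype ι] [Fintype κ] (R : RNN ι κ ω)
    (x : ι → ℝ) (t : ℕ) : ω → ℝ :=
  R.Ao.mulVec (R.hid x t) + R.bo


/-- tent map expressed with ReLU -/
noncomputable def gT (z : ℝ) : ℝ := 2*z - 4 * max 0 (z - 1/2)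

noncomputable def fT (k : ℕ) (z : ℝ) : ℝ :=
  z - ∑ s ∈ Finset.range k, gT^[s+1] z / 4^(s+1)

lemma gT_nonneg {z : ℝ} (h0 : 0 ≤ z) (h1 : z ≤ 1) : 0 ≤ gT z := by
  unfold gT
  rcases le_total z (1/2) with h | h
  · rw [max_eq_left (by linarith)]; linarith
  · rw [max_eq_right (by linarith)]; linarith

lemma gT_le_one {z : ℝ} (h0 : 0 ≤ z) (h1 : z ≤ 1) : gT z ≤ 1 := by
  unfold gT
  rcases le_total z (1/2) with h | h
  · rw [max_eq_left (by linarith)]; linarith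
  · rw [max_eq_right (by linarith)]; linarith

lemma gT_id {z : ℝ} (h0 : 0 ≤ z) (h1 : z ≤ 1) :
    z - z^2 = gT z / 4 + (gT z - (gT z)^2) / 4 := by
  unfold gT
  rcases le_total z (1/2) with h | h
  · rw [max_eq_left (by linarith)]; ring
  · rw [max_eq_right (by linarith)]; ring

lemma gT_iter_mem (k : ℕ) {z : ℝ} (h0 : 0 ≤ z) (h1 : z ≤ 1) :
    0 ≤ gT^[k] z ∧ gT^[k] z ≤ 1 := by
  induction k with
  | zero => simpa using ⟨h0, h1⟩
  | succ n ih =>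
    rw [Function.iterate_succ_apply']
    exact ⟨gT_nonneg ih.1 ih.2, gT_le_one ih.1 ih.2⟩

lemma fT_zero (z : ℝ) : fT 0 z = z := by simp [fT]

lemma fT_succ (k : ℕ) (z : ℝ) : fT (k+1) z = fT k z - gT^[k+1] z / 4^(k+1) := by
  simp [fT, Finset.sum_range_succ]; ring

lemma fT_sub_sq (k : ℕ) {z : ℝ} (h0 : 0 ≤ z) (h1 : z ≤ 1) :
    fT k z - z^2 = (gT^[k] z - (gT^[k] z)^2) / 4^k := by
  induction k with
  | zero => simp [fT_zero]
  | succ n ih =>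
    have hw := gT_iter_mem n h0 h1
    have hid := gT_id hw.1 hw.2
    rw [fT_succ, Function.iterate_succ_apply']
    have ihe : fT n z = z^2 + (gT^[n] z - (gT^[n] z)^2) / 4^n := by linarith
    rw [ihe, hid, pow_succ]
    ring

lemma fT_err_nonneg (k : ℕ) {z : ℝ} (h0 : 0 ≤ z) (h1 : z ≤ 1) :
    0 ≤ fT k z - z^2 := by
  rw [fT_sub_sq k h0 h1]
  have hw := gT_iter_mem k h0 h1
  have h : 0 ≤ gT^[k] z - (gT^[k] z)^2 := by nlinarith [hw.1, hw.2]
  exact div_nonneg h (by positivity)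

lemma fT_err_le (k : ℕ) {z : ℝ} (h0 : 0 ≤ z) (h1 : z ≤ 1) :
    fT k z - z^2 ≤ (1/4) / 4^k := by
  rw [fT_sub_sq k h0 h1]
  have hw := gT_iter_mem k h0 h1
  have h1' : gT^[k] z - (gT^[k] z)^2 ≤ 1/4 := by nlinarith [sq_nonneg (gT^[k] z - 1/2)]
  gcongr

lemma fT_mem (k : ℕ) {z : ℝ} (h0 : 0 ≤ z) (h1 : z ≤ 1) :
    0 ≤ fT k z ∧ fT k z ≤ 1 := by
  constructor
  · have := fT_err_nonneg k h0 h1; nlinarith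
  · induction k with
    | zero => simpa [fT_zero]
    | succ n ih =>
      rw [fT_succ]
      have hw := gT_iter_mem (n+1) h0 h1
      have : 0 ≤ gT^[n+1] z / 4^(n+1) := div_nonneg hw.1 (by positivity)
      linarith
noncomputable def aV (D : ℝ) (x : Fin 2 → ℝ) : ℝ := |x 0 + x 1| / (2*D)
noncomputable def bV (D : ℝ) (x : Fin 2 → ℝ) : ℝ := |x 0 - x 1| / (2*D)

noncomputable def mulRNN (D : ℝ) : RNN (Fin 2) (Fin 14) (Fin 1) where
  Ah := Matrix.of ![
    ![0,0,0,0,0, 0,0,0,0,0, 0,0,0,0],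
    ![0,0,0,0,0, 0,0,0,0,0, 0,0,0,0],
    ![1,1,1/2,-1,0, 0,0,0,0,0, 0,0,0,0],
    ![1,1,1/2,-1,0, 0,0,0,0,0, -(1/8),-(1/2),0,0],
    ![1,1,-(1/2),1,1, 0,0,0,0,0, 0,0,0,0],
    ![0,0,0,0,0, 0,0,0,0,0, 0,0,0,0],
    ![0,0,0,0,0, 0,0,0,0,0, 0,0,0,0],
    ![0,0,0,0,0, 1,1,1/2,-1,0, 0,0,0,0],
    ![0,0,0,0,0, 1,1,1/2,-1,0, -(1/8),-(1/2),0,0],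
    ![0,0,0,0,0, 1,1,-(1/2),1,1, 0,0,0,0],
    ![0,0,0,0,0, 0,0,0,0,0, 1/4,1,0,0],
    ![0,0,0,0,0, 0,0,0,0,0, 0,0,-1,0],
    ![0,0,0,0,0, 0,0,0,0,0, 0,0,0,0],
    ![0,0,0,0,0, 0,0,0,0,0, 0,0,0,0]]
  Ax := Matrix.of ![
    ![1/(2*D), 1/(2*D)],
    ![-(1/(2*D)), -(1/(2*D))],
    ![0,0], ![0,0], ![0,0],
    ![1/(2*D), -(1/(2*D))],
    ![-(1/(2*D)), 1/(2*D)],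
    ![0,0], ![0,0], ![0,0], ![0,0], ![0,0], ![0,0], ![0,0]]
  Ao := Matrix.of ![![D^2, D^2, -(D^2/2), D^2, D^2, -(D^2), -(D^2), D^2/2, -(D^2), -(D^2), 0,0,0,0]]
  bh := ![0,0,0,0,0,0,0,0,0,0,0,1,1,0]
  bo := ![0]

noncomputable def hidVal (D : ℝ) (x : Fin 2 → ℝ) : ℕ → Fin 14 → ℝ
  | 0 => ![max 0 ((x 0 + x 1)/(2*D)), max 0 (-((x 0 + x 1)/(2*D))), 0, 0, 0,
           max 0 ((x 0 - x 1)/(2*D)), max 0 (-((x 0 - x 1)/(2*D))), 0, 0, 0,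
           0, 1, 1, 0]
  | (t+1) => ![0, 0, gT^[t] (aV D x)/4^t, max 0 (gT^[t] (aV D x) - 1/2)/4^t, fT t (aV D x),
               0, 0, gT^[t] (bV D x)/4^t, max 0 (gT^[t] (bV D x) - 1/2)/4^t, fT t (bV D x),
               1/4^t, 0, 1, 0]

lemma max_add_max_neg (s : ℝ) : max 0 s + max 0 (-s) = |s| := by
  rcases le_total 0 s with h | h
  · rw [max_eq_right h, max_eq_left (by linarith), abs_of_nonneg h]; ring
  · rw [max_eq_left h, max_eq_right (by linarith), abs_of_nonpos h]; ring

lemma relu_div {t c : ℝ} (hc : 0 < c) : max 0 (t/c) = max 0 t / c := by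
  rcases le_total t 0 with h | h
  · have h2 : t / c ≤ 0 := div_nonpos_of_nonpos_of_nonneg h hc.le
    rw [max_eq_left h2, max_eq_left h, zero_div]
  · rw [max_eq_right (div_nonneg h hc.le), max_eq_right h]

lemma vat14_0 {α : Type*} (a0 a1 a2 a3 a4 a5 a6 a7 a8 a9 a10 a11 a12 a13 : α) : (![a0,a1,a2,a3,a4,a5,a6,a7,a8,a9,a10,a11,a12,a13] : Fin 14 → α) 0 = a0 := rfl
lemma vat14_1 {α : Type*} (a0 a1 a2 a3 a4 a5 a6 a7 a8 a9 a10 a11 a12 a13 : α) : (![a0,a1,a2,a3,a4,a5,a6,a7,a8,a9,a10,a11,a12,a13] : Fin 14 → α) 1 = a1 := rfl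
lemma vat14_2 {α : Type*} (a0 a1 a2 a3 a4 a5 a6 a7 a8 a9 a10 a11 a12 a13 : α) : (![a0,a1,a2,a3,a4,a5,a6,a7,a8,a9,a10,a11,a12,a13] : Fin 14 → α) 2 = a2 := rfl
lemma vat14_3 {α : Type*} (a0 a1 a2 a3 a4 a5 a6 a7 a8 a9 a10 a11 a12 a13 : α) : (![a0,a1,a2,a3,a4,a5,a6,a7,a8,a9,a10,a11,a12,a13] : Fin 14 → α) 3 = a3 := rfl
lemma vat14_4 {α : Type*} (a0 a1 a2 a3 a4 a5 a6 a7 a8 a9 a10 a11 a12 a13 : α) : (![a0,a1,a2,a3,a4,a5,a6,a7,a8,a9,a10,a11,a12,a13] : Fin 14 → α) 4 = a4 := rfl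
lemma vat14_5 {α : Type*} (a0 a1 a2 a3 a4 a5 a6 a7 a8 a9 a10 a11 a12 a13 : α) : (![a0,a1,a2,a3,a4,a5,a6,a7,a8,a9,a10,a11,a12,a13] : Fin 14 → α) 5 = a5 := rfl
lemma vat14_6 {α : Type*} (a0 a1 a2 a3 a4 a5 a6 a7 a8 a9 a10 a11 a12 a13 : α) : (![a0,a1,a2,a3,a4,a5,a6,a7,a8,a9,a10,a11,a12,a13] : Fin 14 → α) 6 = a6 := rfl
lemma vat14_7 {α : Type*} (a0 a1 a2 a3 a4 a5 a6 a7 a8 a9 a10 a11 a12 a13 : α) : (![a0,a1,a2,a3,a4,a5,a6,a7,a8,a9,a10,a11,a12,a13] : Fin 14 → α) 7 = a7 := rfl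
lemma vat14_8 {α : Type*} (a0 a1 a2 a3 a4 a5 a6 a7 a8 a9 a10 a11 a12 a13 : α) : (![a0,a1,a2,a3,a4,a5,a6,a7,a8,a9,a10,a11,a12,a13] : Fin 14 → α) 8 = a8 := rfl
lemma vat14_9 {α : Type*} (a0 a1 a2 a3 a4 a5 a6 a7 a8 a9 a10 a11 a12 a13 : α) : (![a0,a1,a2,a3,a4,a5,a6,a7,a8,a9,a10,a11,a12,a13] : Fin 14 → α) 9 = a9 := rfl
lemma vat14_10 {α : Type*} (a0 a1 a2 a3 a4 a5 a6 a7 a8 a9 a10 a11 a12 a13 : α) : (![a0,a1,a2,a3,a4,a5,a6,a7,a8,a9,a10,a11,a12,a13] : Fin 14 → α) 10 = a10 := rfl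
lemma vat14_11 {α : Type*} (a0 a1 a2 a3 a4 a5 a6 a7 a8 a9 a10 a11 a12 a13 : α) : (![a0,a1,a2,a3,a4,a5,a6,a7,a8,a9,a10,a11,a12,a13] : Fin 14 → α) 11 = a11 := rfl
lemma vat14_12 {α : Type*} (a0 a1 a2 a3 a4 a5 a6 a7 a8 a9 a10 a11 a12 a13 : α) : (![a0,a1,a2,a3,a4,a5,a6,a7,a8,a9,a10,a11,a12,a13] : Fin 14 → α) 12 = a12 := rfl
lemma vat14_13 {α : Type*} (a0 a1 a2 a3 a4 a5 a6 a7 a8 a9 a10 a11 a12 a13 : α) : (![a0,a1,a2,a3,a4,a5,a6,a7,a8,a9,a10,a11,a12,a13] : Fin 14 → α) 13 = a13 := rfl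
lemma vat2_0 {α : Type*} (a0 a1 : α) : (![a0,a1] : Fin 2 → α) 0 = a0 := rfl
lemma vat2_1 {α : Type*} (a0 a1 : α) : (![a0,a1] : Fin 2 → α) 1 = a1 := rfl
lemma gT_def (w : ℝ) : gT w = 2*w - 4*max 0 (w - 2⁻¹) := by
  unfold gT; norm_num

lemma step_m (s : ℕ) {z : ℝ} (h0 : 0 ≤ z) (h1 : z ≤ 1) :
    max 0 (gT^[s] z / 4^s * 2⁻¹ + -(max 0 (gT^[s] z - 2⁻¹) / 4^s)) = gT^[s] (gT z) / 4^(s+1) := by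
  have hG := gT_iter_mem s h0 h1
  have hne : (4:ℝ)^s ≠ 0 := by positivity
  have e : gT^[s] z / 4^s * 2⁻¹ + -(max 0 (gT^[s] z - 2⁻¹) / 4^s) = gT (gT^[s] z) / 4^(s+1) := by
    rw [gT_def, pow_succ]; field_simp; ring
  rw [e, max_eq_right (div_nonneg (gT_nonneg hG.1 hG.2) (by positivity)),
    ← Function.iterate_succ_apply' gT s z, Function.iterate_succ_apply gT s z]

lemma step_e (s : ℕ) (z : ℝ) :
    max 0 (gT^[s] z / 4^s * 2⁻¹ + (-(max 0 (gT^[s] z - 2⁻¹) / 4^s) + -((4^s)⁻¹ * 8⁻¹)))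
      = max 0 (gT^[s] (gT z) - 2⁻¹) / 4^(s+1) := by
  have hne : (4:ℝ)^s ≠ 0 := by positivity
  have e : gT^[s] z / 4^s * 2⁻¹ + (-(max 0 (gT^[s] z - 2⁻¹) / 4^s) + -((4^s)⁻¹ * 8⁻¹))
      = (gT (gT^[s] z) - 2⁻¹) / 4^(s+1) := by
    rw [gT_def, pow_succ]; field_simp; ring
  rw [e, relu_div (by positivity), ← Function.iterate_succ_apply' gT s z, Function.iterate_succ_apply gT s z]

lemma step_S (s : ℕ) {z : ℝ} (h0 : 0 ≤ z) (h1 : z ≤ 1) :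
    max 0 (-(gT^[s] z / 4^s * 2⁻¹) + (max 0 (gT^[s] z - 2⁻¹) / 4^s + fT s z)) = fT (s+1) z := by
  have hne : (4:ℝ)^s ≠ 0 := by positivity
  have e : -(gT^[s] z / 4^s * 2⁻¹) + (max 0 (gT^[s] z - 2⁻¹) / 4^s + fT s z)
      = fT s z - gT (gT^[s] z) / 4^(s+1) := by
    rw [gT_def, pow_succ]; field_simp; ring
  rw [e, ← Function.iterate_succ_apply' gT s z, ← fT_succ]
  exact max_eq_right (fT_mem (s+1) h0 h1).1
set_option maxHeartbeats 2000000 in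
lemma hid_eq (D : ℝ) (hD : 0 < D) (x : Fin 2 → ℝ)
    (ha0 : 0 ≤ aV D x) (ha1 : aV D x ≤ 1) (hb0 : 0 ≤ bV D x) (hb1 : bV D x ≤ 1) :
    ∀ t, (mulRNN D).hid x t = hidVal D x t := by
  have habs_a : |(x 0 + x 1)/(2*D)| = aV D x := by
    rw [abs_div, abs_of_pos (by linarith : (0:ℝ) < 2*D)]; rfl
  have habs_b : |(x 0 - x 1)/(2*D)| = bV D x := by
    rw [abs_div, abs_of_pos (by linarith : (0:ℝ) < 2*D)]; rfl
  intro t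
  induction t with
  | zero =>
    funext i
    fin_cases i <;>
      simp [RNN.hid, relu, mulRNN, hidVal, Matrix.mulVec, dotProduct,
        Fin.sum_univ_succ, Matrix.of_apply,
        vat14_0, vat14_1, vat14_2, vat14_3, vat14_4, vat14_5, vat14_6,
        vat14_7, vat14_8, vat14_9, vat14_10, vat14_11, vat14_12, vat14_13,
        vat2_0, vat2_1] <;>
      · congr 1
        ring
  | succ t ih =>
    rw [RNN.hid, ih]
    cases t with
    | zero =>
      funext i
      fin_cases i <;>
        simp [relu, mulRNN, hidVal, Matrix.mulVec, dotProduct,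
          Fin.sum_univ_succ, Matrix.of_apply, fT_zero,
          vat14_0, vat14_1, vat14_2, vat14_3, vat14_4, vat14_5, vat14_6,
          vat14_7, vat14_8, vat14_9, vat14_10, vat14_11, vat14_12, vat14_13] <;>
        first | simp only [sup_eq_max] | skip
      · rw [max_add_max_neg, habs_a]
        exact max_eq_right ha0
      · rw [show max 0 ((x 0 + x 1)/(2*D)) + (max 0 (-((x 0 + x 1)/(2*D))) + -2⁻¹)
              = |(x 0 + x 1)/(2*D)| - 2⁻¹ from by rw [← max_add_max_neg]; ring, habs_a]
      · rw [max_add_max_neg, habs_a]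
        exact max_eq_right ha0
      · rw [max_add_max_neg, habs_b]
        exact max_eq_right hb0
      · rw [show max 0 ((x 0 - x 1)/(2*D)) + (max 0 (-((x 0 - x 1)/(2*D))) + -2⁻¹)
              = |(x 0 - x 1)/(2*D)| - 2⁻¹ from by rw [← max_add_max_neg]; ring, habs_b]
      · rw [max_add_max_neg, habs_b]
        exact max_eq_right hb0
    | succ s =>
      funext i
      fin_cases i <;>
        simp [relu, mulRNN, hidVal, Matrix.mulVec, dotProduct,
          Fin.sum_univ_succ, Matrix.of_apply,
          vat14_0, vat14_1, vat14_2, vat14_3, vat14_4, vat14_5, vat14_6,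
          vat14_7, vat14_8, vat14_9, vat14_10, vat14_11, vat14_12, vat14_13] <;>
        first | simp only [sup_eq_max] | skip
      · exact step_m s ha0 ha1
      · exact step_e s (aV D x)
      · exact step_S s ha0 ha1
      · exact step_m s hb0 hb1
      · exact step_e s (bV D x)
      · exact step_S s hb0 hb1
      · rw [pow_succ, mul_inv]
lemma out_eq (D : ℝ) (hD : 0 < D) (x : Fin 2 → ℝ)
    (ha0 : 0 ≤ aV D x) (ha1 : aV D x ≤ 1) (hb0 : 0 ≤ bV D x) (hb1 : bV D x ≤ 1) :
    ∀ t, (mulRNN D).out x t 0 = D^2 * (fT t (aV D x) - fT t (bV D x)) := by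
  have habs_a : |(x 0 + x 1)/(2*D)| = aV D x := by
    rw [abs_div, abs_of_pos (by linarith : (0:ℝ) < 2*D)]; rfl
  have habs_b : |(x 0 - x 1)/(2*D)| = bV D x := by
    rw [abs_div, abs_of_pos (by linarith : (0:ℝ) < 2*D)]; rfl
  intro t
  rw [RNN.out, hid_eq D hD x ha0 ha1 hb0 hb1 t]
  cases t with
  | zero =>
    simp [mulRNN, hidVal, Matrix.mulVec, dotProduct, Fin.sum_univ_succ, Matrix.of_apply,
      fT_zero,
      vat14_0, vat14_1, vat14_2, vat14_3, vat14_4, vat14_5, vat14_6,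
      vat14_7, vat14_8, vat14_9, vat14_10, vat14_11, vat14_12, vat14_13, vat2_0, vat2_1]
    rw [show (max 0 ((x 0 + x 1) / (2 * D))) * D ^ 2 +
      ((max 0 (-((x 0 + x 1) / (2 * D)))) * D ^ 2 +
        (-((max 0 ((x 0 - x 1) / (2 * D))) * D ^ 2) + -((max 0 (-((x 0 - x 1) / (2 * D)))) * D ^ 2)))
      = (max 0 ((x 0 + x 1) / (2 * D)) + max 0 (-((x 0 + x 1) / (2 * D)))) * D ^ 2
        - (max 0 ((x 0 - x 1) / (2 * D)) + max 0 (-((x 0 - x 1) / (2 * D)))) * D ^ 2 from by ring,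
      max_add_max_neg, max_add_max_neg, habs_a, habs_b]
    ring
  | succ s =>
    simp [mulRNN, hidVal, Matrix.mulVec, dotProduct, Fin.sum_univ_succ, Matrix.of_apply,
      vat14_0, vat14_1, vat14_2, vat14_3, vat14_4, vat14_5, vat14_6,
      vat14_7, vat14_8, vat14_9, vat14_10, vat14_11, vat14_12, vat14_13, vat2_0, vat2_1]
    rw [fT_succ, fT_succ, Function.iterate_succ_apply' gT s, Function.iterate_succ_apply' gT s]
    simp only [gT_def]
    have hne : (4:ℝ)^s ≠ 0 := by positivity
    rw [pow_succ]
    field_simp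
    ring

lemma hidVal_bound (D : ℝ) (hD : 0 < D) (x : Fin 2 → ℝ)
    (ha0 : 0 ≤ aV D x) (ha1 : aV D x ≤ 1) (hb0 : 0 ≤ bV D x) (hb1 : bV D x ≤ 1) :
    ∀ t i, |hidVal D x t i| ≤ 1 := by
  have habs_a : |(x 0 + x 1)/(2*D)| = aV D x := by
    rw [abs_div, abs_of_pos (by linarith : (0:ℝ) < 2*D)]; rfl
  have habs_b : |(x 0 - x 1)/(2*D)| = bV D x := by
    rw [abs_div, abs_of_pos (by linarith : (0:ℝ) < 2*D)]; rfl
  have key : ∀ p : ℝ, |p| ≤ 1 → |max 0 p| ≤ 1 := by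
    intro p hp
    rw [abs_of_nonneg (le_max_left 0 p)]
    exact max_le (by norm_num) (le_trans (le_abs_self p) hp)
  have key2 : ∀ (c : ℝ) (s : ℕ), 0 ≤ c → c ≤ 1 → |c / 4^s| ≤ 1 := by
    intro c s h0 h1
    rw [abs_of_nonneg (div_nonneg h0 (by positivity))]
    have h4 : (1:ℝ) ≤ 4^s := one_le_pow₀ (by norm_num)
    calc c / 4^s ≤ c / 1 := by gcongr
    _ = c := div_one c
    _ ≤ 1 := h1
  intro t i
  cases t with
  | zero =>
    fin_cases i <;>
      simp only [hidVal,
        vat14_0, vat14_1, vat14_2, vat14_3, vat14_4, vat14_5, vat14_6,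
        vat14_7, vat14_8, vat14_9, vat14_10, vat14_11, vat14_12, vat14_13] <;>
      norm_num
    · exact key _ (by rw [habs_a]; exact ha1)
    · exact key _ (by rw [abs_neg, habs_a]; exact ha1)
    · exact key _ (by rw [habs_b]; exact hb1)
    · exact key _ (by rw [abs_neg, habs_b]; exact hb1)
  | succ s =>
    have hGa := gT_iter_mem s ha0 ha1
    have hGb := gT_iter_mem s hb0 hb1
    have hfa := fT_mem s ha0 ha1
    have hfb := fT_mem s hb0 hb1
    fin_cases i <;>
      simp only [hidVal,
        vat14_0, vat14_1, vat14_2, vat14_3, vat14_4, vat14_5, vat14_6,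
        vat14_7, vat14_8, vat14_9, vat14_10, vat14_11, vat14_12, vat14_13] <;>
      norm_num
    · exact key2 _ s hGa.1 hGa.2
    · exact key2 _ s (le_max_left 0 _) (max_le (by norm_num) (by linarith [hGa.2]))
    · exact abs_le.mpr ⟨by linarith [hfa.1], hfa.2⟩
    · exact key2 _ s hGb.1 hGb.2
    · exact key2 _ s (le_max_left 0 _) (max_le (by norm_num) (by linarith [hGb.2]))
    · exact abs_le.mpr ⟨by linarith [hfb.1], hfb.2⟩
    · rw [show ((4:ℝ)^s)⁻¹ = 1/4^s from by ring]
      exact (abs_le.mp (key2 1 s (by norm_num) le_rfl)).2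

/-- Theorem (multiplication RNN): for every `D ≥ 1` there is an RNN with input
dimension 2, output dimension 1, and hidden state size 14 such that for all
`x = (x₁, x₂) ∈ [−D, D]²` and all `t ∈ ℕ₀`: `|(R 𝒟 x)[t] − x₁·x₂| ≤ (D²/2)·4^{−t}`,
`‖(K 𝒟 x)[t]‖∞ ≤ 1`, and `|(R 𝒟 x)[t]| ≤ D²`. -/
theorem stmt6 (D : ℝ) (hD : 1 ≤ D) :
    ∃ R : RNN (Fin 2) (Fin 14) (Fin 1),
      ∀ x : Fin 2 → ℝ, (∀ i, x i ∈ Set.Icc (-D) D) → ∀ t : ℕ,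
        |R.out x t 0 - x 0 * x 1| ≤ D ^ 2 / 2 * (4 : ℝ) ^ (-(t : ℤ)) ∧
        ‖R.hid x t‖ ≤ 1 ∧ |R.out x t 0| ≤ D ^ 2 := by
  have hD0 : (0:ℝ) < D := by linarith
  refine ⟨mulRNN D, ?_⟩
  intro x hx t
  have hx0 : |x 0| ≤ D := abs_le.mpr ⟨(hx 0).1, (hx 0).2⟩
  have hx1 : |x 1| ≤ D := abs_le.mpr ⟨(hx 1).1, (hx 1).2⟩
  have ha0 : 0 ≤ aV D x := div_nonneg (abs_nonneg _) (by linarith)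
  have hb0 : 0 ≤ bV D x := div_nonneg (abs_nonneg _) (by linarith)
  have ha1 : aV D x ≤ 1 := by
    rw [aV, div_le_one (by linarith)]
    calc |x 0 + x 1| ≤ |x 0| + |x 1| := abs_add_le _ _
    _ ≤ 2 * D := by linarith
  have hb1 : bV D x ≤ 1 := by
    rw [bV, div_le_one (by linarith)]
    calc |x 0 - x 1| ≤ |x 0| + |x 1| := abs_sub _ _
    _ ≤ 2 * D := by linarith
  have hout := out_eq D hD0 x ha0 ha1 hb0 hb1 t
  have hhid := hid_eq D hD0 x ha0 ha1 hb0 hb1 t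
  have hprod : D^2 * ((aV D x)^2 - (bV D x)^2) = x 0 * x 1 := by
    have e1 : (aV D x)^2 = (x 0 + x 1)^2 / (2*D)^2 := by rw [aV, div_pow, sq_abs]
    have e2 : (bV D x)^2 = (x 0 - x 1)^2 / (2*D)^2 := by rw [bV, div_pow, sq_abs]
    rw [e1, e2]
    have hne : (2*D)^2 ≠ 0 := by positivity
    field_simp
    ring
  have hEa0 := fT_err_nonneg t ha0 ha1
  have hEa1 := fT_err_le t ha0 ha1
  have hEb0 := fT_err_nonneg t hb0 hb1
  have hEb1 := fT_err_le t hb0 hb1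
  have hfa := fT_mem t ha0 ha1
  have hfb := fT_mem t hb0 hb1
  have h4t : (0:ℝ) < 4^t := by positivity
  refine ⟨?_, ?_, ?_⟩
  · rw [hout]
    have e : D^2 * (fT t (aV D x) - fT t (bV D x)) - x 0 * x 1
        = D^2 * ((fT t (aV D x) - (aV D x)^2) - (fT t (bV D x) - (bV D x)^2)) := by
      rw [← hprod]; ring
    rw [e, abs_mul, abs_of_nonneg (by positivity : (0:ℝ) ≤ D^2)]
    have habs : |(fT t (aV D x) - (aV D x)^2) - (fT t (bV D x) - (bV D x)^2)| ≤ (1/4)/4^t :=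
      abs_le.mpr ⟨by linarith, by linarith⟩
    calc D^2 * |(fT t (aV D x) - (aV D x)^2) - (fT t (bV D x) - (bV D x)^2)|
        ≤ D^2 * ((1/4)/4^t) := by gcongr
    _ ≤ D^2/2 * (4:ℝ)^(-(t:ℤ)) := by
        rw [zpow_neg, zpow_natCast]
        rw [show D^2 * ((1/4)/4^t) = (D^2/4) * ((4:ℝ)^t)⁻¹ from by ring]
        have : D^2/4 ≤ D^2/2 := by nlinarith [sq_nonneg D]
        exact mul_le_mul_of_nonneg_right this (by positivity)
  · rw [hhid]
    rw [pi_norm_le_iff_of_nonneg (by norm_num : (0:ℝ) ≤ 1)]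
    intro i
    rw [Real.norm_eq_abs]
    exact hidVal_bound D hD0 x ha0 ha1 hb0 hb1 t i
  · rw [hout, abs_mul, abs_of_nonneg (by positivity : (0:ℝ) ≤ D^2)]
    have : |fT t (aV D x) - fT t (bV D x)| ≤ 1 := abs_le.mpr ⟨by linarith, by linarith⟩
    calc D^2 * |fT t (aV D x) - fT t (bV D x)| ≤ D^2 * 1 := by gcongr
    _ = D^2 := mul_one _
end

section
/- Let D >= 1. There exists an RNN R = Q∘K with input dimension 1, output dimension 2, and hidden state size 9 such that for all x ∈ [-D, D] and all t ∈ ℕ₀: |((R D x)[t])_1 - x²| <= (D²/2) * 4^{-t}, ((R D x)[t])_2 = x, ‖(K D x)[t]‖_∞ <= D, and ‖(R D x)[t]‖_∞ <= D². -/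
/-! ### Auxiliary facts about the hat function -/

/-- hat function -/
noncomputable def gg (u : ℝ) : ℝ := 2*u - 4 * max 0 (u - 1/2)

/-- iterated hat -/
noncomputable def GG : ℕ → ℝ → ℝ
  | 0, y => y
  | t+1, y => gg (GG t y)

lemma gg_mem {u : ℝ} (h : u ∈ Set.Icc (0:ℝ) 1) : gg u ∈ Set.Icc (0:ℝ) 1 := by
  obtain ⟨h0, h1⟩ := h
  rcases le_total u (1/2) with hu | hu
  · rw [gg, max_eq_left (by linarith)]; constructor <;> linarith
  · rw [gg, max_eq_right (by linarith)]; constructor <;> linarith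

lemma GG_mem {y : ℝ} (h : y ∈ Set.Icc (0:ℝ) 1) (t : ℕ) : GG t y ∈ Set.Icc (0:ℝ) 1 := by
  induction t with
  | zero => exact h
  | succ t ih => exact gg_mem ih

lemma gg_id {u : ℝ} (h : u ∈ Set.Icc (0:ℝ) 1) : gg u * (1 - gg u) = 4*u*(1-u) - gg u := by
  obtain ⟨h0, h1⟩ := h
  rcases le_total u (1/2) with hu | hu
  · rw [gg, max_eq_left (by linarith)]; ring
  · rw [gg, max_eq_right (by linarith)]; ring

/-- partial sums of the Yarotsky series -/
noncomputable def ES (t : ℕ) (y : ℝ) : ℝ := ∑ s ∈ Finset.range t, GG (s+1) y / 4^(s+1)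

lemma key {y : ℝ} (h : y ∈ Set.Icc (0:ℝ) 1) (t : ℕ) :
    y - ES t y = y^2 + GG t y * (1 - GG t y) / 4^t := by
  induction t with
  | zero => simp only [ES, Finset.range_zero, Finset.sum_empty, GG, pow_zero]; ring
  | succ t ih =>
    have hid := gg_id (GG_mem h t)
    have hes : ES (t+1) y = ES t y + GG (t+1) y / 4^(t+1) := by
      rw [ES, Finset.sum_range_succ]; rfl
    have hg : GG (t+1) y = gg (GG t y) := rfl
    rw [hes, hg]
    linear_combination ih - hid / 4^(t+1)

lemma ES_nonneg {y : ℝ} (h : y ∈ Set.Icc (0:ℝ) 1) (t : ℕ) : 0 ≤ ES t y := by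
  apply Finset.sum_nonneg
  intro s _
  have h1 := (GG_mem h (s+1)).1
  positivity

lemma ES_le {y : ℝ} (h : y ∈ Set.Icc (0:ℝ) 1) (t : ℕ) : ES t y ≤ y := by
  have hk := key h t
  have h1 := GG_mem h t
  have h2 : 0 ≤ GG t y * (1 - GG t y) / 4^t :=
    div_nonneg (mul_nonneg h1.1 (by linarith [h1.2])) (by positivity)
  nlinarith [sq_nonneg y]

/-! ### vector-literal evaluation lemmas -/

section cv
variable {α : Type*} (a b c d e f g h i : α)
lemma cv0 : ![a,b,c,d,e,f,g,h,i] (0:Fin 9) = a := rfl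
lemma cv1 : ![a,b,c,d,e,f,g,h,i] (1:Fin 9) = b := rfl
lemma cv2 : ![a,b,c,d,e,f,g,h,i] (2:Fin 9) = c := rfl
lemma cv3 : ![a,b,c,d,e,f,g,h,i] (3:Fin 9) = d := rfl
lemma cv4 : ![a,b,c,d,e,f,g,h,i] (4:Fin 9) = e := rfl
lemma cv5 : ![a,b,c,d,e,f,g,h,i] (5:Fin 9) = f := rfl
lemma cv6 : ![a,b,c,d,e,f,g,h,i] (6:Fin 9) = g := rfl
lemma cv7 : ![a,b,c,d,e,f,g,h,i] (7:Fin 9) = h := rfl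
lemma cv8 : ![a,b,c,d,e,f,g,h,i] (8:Fin 9) = i := rfl
lemma cw0 (p q : α) : ![p,q] (0:Fin 2) = p := rfl
lemma cw1 (p q : α) : ![p,q] (1:Fin 2) = q := rfl
lemma cm0 : ![a,b,c,d,e,f,g,h,i] (⟨0, by omega⟩ : Fin 9) = a := rfl
lemma cm1 : ![a,b,c,d,e,f,g,h,i] (⟨1, by omega⟩ : Fin 9) = b := rfl
lemma cm2 : ![a,b,c,d,e,f,g,h,i] (⟨2, by omega⟩ : Fin 9) = c := rfl
lemma cm3 : ![a,b,c,d,e,f,g,h,i] (⟨3, by omega⟩ : Fin 9) = d := rfl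
lemma cm4 : ![a,b,c,d,e,f,g,h,i] (⟨4, by omega⟩ : Fin 9) = e := rfl
lemma cm5 : ![a,b,c,d,e,f,g,h,i] (⟨5, by omega⟩ : Fin 9) = f := rfl
lemma cm6 : ![a,b,c,d,e,f,g,h,i] (⟨6, by omega⟩ : Fin 9) = g := rfl
lemma cm7 : ![a,b,c,d,e,f,g,h,i] (⟨7, by omega⟩ : Fin 9) = h := rfl
lemma cm8 : ![a,b,c,d,e,f,g,h,i] (⟨8, by omega⟩ : Fin 9) = i := rfl
lemma cn0 (p q : α) : ![p,q] (⟨0, by omega⟩ : Fin 2) = p := rfl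
lemma cn1 (p q : α) : ![p,q] (⟨1, by omega⟩ : Fin 2) = q := rfl
end cv

lemma sum_univ_nine {β : Type*} [AddCommMonoid β] (f : Fin 9 → β) :
    ∑ i, f i = f 0 + f 1 + f 2 + f 3 + f 4 + f 5 + f 6 + f 7 + f 8 := by
  rw [Fin.sum_univ_castSucc, Fin.sum_univ_eight]
  rfl

lemma mv9 (M : Matrix (Fin 9) (Fin 9) ℝ) (v : Fin 9 → ℝ) (i : Fin 9) :
    M.mulVec v i = M i 0 * v 0 + M i 1 * v 1 + M i 2 * v 2 + M i 3 * v 3 + M i 4 * v 4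
      + M i 5 * v 5 + M i 6 * v 6 + M i 7 * v 7 + M i 8 * v 8 := by
  rw [Matrix.mulVec, dotProduct, sum_univ_nine]

lemma mv1 (M : Matrix (Fin 9) (Fin 1) ℝ) (v : Fin 1 → ℝ) (i : Fin 9) :
    M.mulVec v i = M i 0 * v 0 := by
  rw [Matrix.mulVec, dotProduct, Fin.sum_univ_one]

lemma mv2 (M : Matrix (Fin 2) (Fin 9) ℝ) (v : Fin 9 → ℝ) (i : Fin 2) :
    M.mulVec v i = M i 0 * v 0 + M i 1 * v 1 + M i 2 * v 2 + M i 3 * v 3 + M i 4 * v 4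
      + M i 5 * v 5 + M i 6 * v 6 + M i 7 * v 7 + M i 8 * v 8 := by
  rw [Matrix.mulVec, dotProduct, sum_univ_nine]

lemma maxz {A B : ℝ} (h : A = B) (hB : 0 ≤ B) : 0 ⊔ A = B := by
  rw [h]; exact max_eq_right hB

lemma max0 {A : ℝ} (h : A ≤ 0) : 0 ⊔ A = 0 := max_eq_left h

/-! ### the RNN -/

/-- The squaring RNN. Hidden units: `p=x⁺, q=x⁻, m, n, c, S, p', q', k`. -/
noncomputable def myR (D : ℝ) : RNN (Fin 1) (Fin 9) (Fin 2) where
  Ah := !![1,0,0,0,0,0,0,0,0;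
           0,1,0,0,0,0,0,0,0;
           0,0,1/2,-1,0,0,1,1,0;
           0,0,1/2,-1,-1,0,1,1,0;
           0,0,0,0,1/4,0,0,0,-1;
           0,0,1/2,-1,0,1,0,0,0;
           0,0,0,0,0,0,1,0,-2;
           0,0,0,0,0,0,0,1,-2;
           0,0,0,0,0,0,0,0,0]
  Ax := !![1;-1;0;0;0;0;1;-1;0]
  Ao := !![D,D,-D/2,D,0,-D,0,0,0;
           1,-1,0,0,0,0,0,0,0]
  bh := ![0,0,0,0,D/2,0,0,0,D/2]
  bo := ![0,0]

/-- claimed hidden state -/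
noncomputable def H (D x : ℝ) : ℕ → Fin 9 → ℝ
  | 0 => ![max 0 x, max 0 (-x), 0, 0, D/2, 0, max 0 x, max 0 (-x), D/2]
  | t+1 => ![max 0 x, max 0 (-x),
      D * GG t (|x|/D) / 4^t,
      D * max 0 (GG t (|x|/D) - 1/2) / 4^t,
      D/2 / 4^(t+1),
      D * ES t (|x|/D),
      0, 0, D/2]

lemma hid_eq_s15 (D x : ℝ) (hD : 1 ≤ D) (hx : |x| ≤ D) (t : ℕ) :
    (myR D).hid (fun _ => x) t = H D x t := by
  have hD0 : (0:ℝ) < D := by linarith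
  have hy : |x|/D ∈ Set.Icc (0:ℝ) 1 :=
    ⟨by positivity, by rw [div_le_one hD0]; exact hx⟩
  have habs : max 0 x + max 0 (-x) = |x| := by
    rcases le_total x 0 with h | h
    · rw [max_eq_left h, max_eq_right (by linarith), abs_of_nonpos h]; ring
    · rw [max_eq_right h, max_eq_left (by linarith), abs_of_nonneg h]; ring
  have habs2 : max 0 x ≤ D := by
    rcases le_total x 0 with h | h
    · rw [max_eq_left h]; linarith
    · rw [max_eq_right h]
      calc x ≤ |x| := le_abs_self x
        _ ≤ D := hx
  have habs3 : max 0 (-x) ≤ D := by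
    rcases le_total (-x) 0 with h | h
    · rw [max_eq_left h]; linarith
    · rw [max_eq_right h]
      calc -x ≤ |x| := neg_le_abs x
        _ ≤ D := hx
  induction t with
  | zero =>
    have e0 : (myR D).hid (fun _ => x) 0 = relu ((myR D).Ax.mulVec (fun _ => x) + (myR D).bh) := rfl
    funext i
    rw [e0]
    have erelu : relu ((myR D).Ax.mulVec (fun _ => x) + (myR D).bh) i
        = max 0 ((myR D).Ax.mulVec (fun _ => x) i + (myR D).bh i) := rfl
    rw [erelu]
    fin_cases i <;>
      rw [mv1] <;>
      simp only [myR, H, Matrix.of_apply, cv0, cv1, cv2, cv3, cv4, cv5, cv6, cv7, cv8,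
          cm0, cm1, cm2, cm3, cm4, cm5, cm6, cm7, cm8,
          Matrix.cons_val_fin_one,
          zero_mul, one_mul, mul_one, mul_zero, add_zero, zero_add, neg_mul, mul_neg,
          neg_zero, pow_zero, div_one, neg_neg, sub_zero, pow_one, max_self]
    · exact max_eq_right (by positivity)
    · exact max_eq_right (by positivity)
  | succ t ih =>
    have expand : ∀ i : Fin 9,
        (myR D).hid (fun _ => x) (t+1) i
          = max 0 ((myR D).Ah.mulVec (H D x t) i + (myR D).bh i) := by
      intro i
      have e1 : (myR D).hid (fun _ => x) (t+1)
          = relu ((myR D).Ah.mulVec ((myR D).hid (fun _ => x) t) + (myR D).bh) := rfl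
      rw [e1, ih]
      rfl
    funext i
    cases t with
    | zero =>
      have hGG0 : GG 0 (|x|/D) = |x|/D := rfl
      fin_cases i <;>
        rw [expand, mv9] <;>
        simp only [myR, H, Matrix.of_apply, cv0, cv1, cv2, cv3, cv4, cv5, cv6, cv7, cv8,
          cm0, cm1, cm2, cm3, cm4, cm5, cm6, cm7, cm8,
          hGG0, ES, Finset.range_zero, Finset.sum_empty,
          zero_mul, one_mul, mul_one, mul_zero, add_zero, zero_add, neg_mul, mul_neg,
          neg_zero, pow_zero, div_one, neg_neg, sub_zero, pow_one, max_self]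
      · exact max_eq_right (le_max_left 0 x)
      · exact max_eq_right (le_max_left 0 (-x))
      · -- m
        rw [habs, ← mul_div_assoc, mul_div_cancel_left₀ _ (ne_of_gt hD0)]
        exact max_eq_right (abs_nonneg x)
      · -- n
        rw [show D * (0 ⊔ (|x|/D - 1/2)) = 0 ⊔ (D * (|x|/D - 1/2)) from by
            rw [mul_max_of_nonneg _ _ hD0.le, mul_zero],
          show D * (|x|/D - 1/2) = |x| - D/2 from by
            rw [mul_sub, ← mul_div_assoc, mul_div_cancel_left₀ _ (ne_of_gt hD0)]; ring]
        congr 1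
        linarith [habs]
      · -- c
        exact maxz (by ring) (by positivity)
      · -- p'
        exact max0 (by linarith [habs2])
      · -- q'
        exact max0 (by linarith [habs3])
      · exact max_eq_right (by positivity)
    | succ t =>
      have hu := GG_mem hy t
      have hgu := gg_mem hu
      have hES0 := ES_nonneg hy t
      have hGs : GG (t+1) (|x|/D) = gg (GG t (|x|/D)) := rfl
      have hggu : gg (GG t (|x|/D)) = 2*(GG t (|x|/D)) - 4 * max 0 (GG t (|x|/D) - 1/2) := rfl
      have h4 : (0:ℝ) < 4^t := by positivity
      fin_cases i <;>
        rw [expand, mv9] <;>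
        simp only [myR, H, Matrix.of_apply, cv0, cv1, cv2, cv3, cv4, cv5, cv6, cv7, cv8,
          cm0, cm1, cm2, cm3, cm4, cm5, cm6, cm7, cm8,
          zero_mul, one_mul, mul_one, mul_zero, add_zero, zero_add, neg_mul, mul_neg,
          neg_zero, pow_zero, div_one, neg_neg, sub_zero, pow_one, max_self]
      · exact max_eq_right (le_max_left 0 x)
      · exact max_eq_right (le_max_left 0 (-x))
      · -- m
        have hG1 := (GG_mem hy (t+1)).1
        exact maxz (by rw [hGs, hggu]; field_simp; ring)
          (div_nonneg (mul_nonneg hD0.le hG1) (by positivity))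
      · -- n
        rw [show D * (0 ⊔ (GG (t+1) (|x|/D) - 1/2)) / 4^(t+1)
            = 0 ⊔ (D / 4^(t+1) * (GG (t+1) (|x|/D) - 1/2)) from by
          rw [show D * (0 ⊔ (GG (t+1) (|x|/D) - 1/2)) / 4^(t+1)
              = (D/4^(t+1)) * (0 ⊔ (GG (t+1) (|x|/D) - 1/2)) from by ring,
            mul_max_of_nonneg _ _ (by positivity : (0:ℝ) ≤ D/4^(t+1)), mul_zero]]
        congr 1
        rw [hGs, hggu]; field_simp; ring
      · -- c
        exact maxz (by ring) (by positivity)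
      · -- S
        have hesucc : ES (t+1) (|x|/D) = ES t (|x|/D) + GG (t+1) (|x|/D)/4^(t+1) := by
          rw [ES, Finset.sum_range_succ]; rfl
        have hE1 := ES_nonneg hy (t+1)
        exact maxz (by rw [hesucc, hGs, hggu]; field_simp; ring)
          (mul_nonneg hD0.le hE1)
      · exact max0 (by linarith)
      · exact max0 (by linarith)
      · exact max_eq_right (by positivity)

lemma habs_add (x : ℝ) : max 0 x + max 0 (-x) = |x| := by
  rcases le_total x 0 with h | h
  · rw [max_eq_left h, max_eq_right (by linarith), abs_of_nonpos h]; ring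
  · rw [max_eq_right h, max_eq_left (by linarith), abs_of_nonneg h]; ring

lemma out_eq_s15 (D x : ℝ) (hD : 1 ≤ D) (hx : |x| ≤ D) (t : ℕ) :
    (myR D).out (fun _ => x) t 0 = D^2 * (|x|/D - ES t (|x|/D)) ∧
    (myR D).out (fun _ => x) t 1 = x := by
  have hD0 : (0:ℝ) < D := by linarith
  have e0 : (myR D).out (fun _ => x) t 0
      = (myR D).Ao.mulVec ((myR D).hid (fun _ => x) t) 0 + (myR D).bo 0 := rfl
  have e1 : (myR D).out (fun _ => x) t 1
      = (myR D).Ao.mulVec ((myR D).hid (fun _ => x) t) 1 + (myR D).bo 1 := rfl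
  rw [e0, e1, hid_eq_s15 D x hD hx, mv2, mv2]
  constructor
  · cases t with
    | zero =>
      simp only [myR, H, Matrix.of_apply, cv0, cv1, cv2, cv3, cv4, cv5, cv6, cv7, cv8,
        cw0, cw1, cn0, cn1, ES, Finset.range_zero, Finset.sum_empty,
        zero_mul, one_mul, mul_one, mul_zero, add_zero, zero_add, neg_mul, mul_neg,
        neg_zero, pow_zero, div_one, neg_neg, sub_zero, pow_one]
      rw [show D*(0 ⊔ x) + D*(0 ⊔ -x) = D * |x| from by rw [← habs_add x]; ring]
      field_simp
    | succ t =>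
      simp only [myR, H, Matrix.of_apply, cv0, cv1, cv2, cv3, cv4, cv5, cv6, cv7, cv8,
        cw0, cw1, cn0, cn1,
        zero_mul, one_mul, mul_one, mul_zero, add_zero, zero_add, neg_mul, mul_neg,
        neg_zero, pow_zero, div_one, neg_neg, sub_zero, pow_one]
      rw [show D*(0 ⊔ x) + D*(0 ⊔ -x) = D * |x| from by rw [← habs_add x]; ring]
      have hesucc : ES (t+1) (|x|/D) = ES t (|x|/D) + GG (t+1) (|x|/D)/4^(t+1) := by
        rw [ES, Finset.sum_range_succ]; rfl
      have hGs : GG (t+1) (|x|/D) = gg (GG t (|x|/D)) := rfl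
      have hggu : gg (GG t (|x|/D)) = 2*(GG t (|x|/D)) - 4 * max 0 (GG t (|x|/D) - 1/2) := rfl
      rw [hesucc, hGs, hggu]
      field_simp
      ring
  · simp only [myR, H, Matrix.of_apply, cv0, cv1, cv2, cv3, cv4, cv5, cv6, cv7, cv8,
      cw0, cw1, cn0, cn1,
      zero_mul, one_mul, mul_one, mul_zero, add_zero, zero_add, neg_mul, mul_neg,
      neg_zero, pow_zero, div_one, neg_neg, sub_zero, pow_one]
    cases t with
    | zero =>
      simp only [H, cv0, cv1, cm0, cm1]
      have := habs_add x
      rcases le_total x 0 with h | h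
      · rw [max_eq_left h, max_eq_right (by linarith)]; ring
      · rw [max_eq_right h, max_eq_left (by linarith)]; ring
    | succ t =>
      simp only [H, cv0, cv1, cm0, cm1]
      rcases le_total x 0 with h | h
      · rw [max_eq_left h, max_eq_right (by linarith)]; ring
      · rw [max_eq_right h, max_eq_left (by linarith)]; ring

lemma bnd {D u : ℝ} (hD : 0 < D) (h0 : 0 ≤ u) (h1 : u ≤ 1) (t : ℕ) : D * u / 4^t ≤ D := by
  have h41 : (1:ℝ) ≤ 4^t := one_le_pow₀ (by norm_num)
  calc D * u / 4^t ≤ D * u := div_le_self (mul_nonneg hD.le h0) h41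
    _ ≤ D * 1 := mul_le_mul_of_nonneg_left h1 hD.le
    _ = D := mul_one D

lemma hid_norm (D x : ℝ) (hD : 1 ≤ D) (hx : |x| ≤ D) (t : ℕ) :
    ‖(myR D).hid (fun _ => x) t‖ ≤ D := by
  have hD0 : (0:ℝ) < D := by linarith
  have hy : |x|/D ∈ Set.Icc (0:ℝ) 1 :=
    ⟨by positivity, by rw [div_le_one hD0]; exact hx⟩
  have habs2 : 0 ⊔ x ≤ D := by
    rcases le_total x 0 with h | h
    · rw [max_eq_left h]; linarith
    · rw [max_eq_right h]; exact le_trans (le_abs_self x) hx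
  have habs3 : 0 ⊔ -x ≤ D := by
    rcases le_total (-x) 0 with h | h
    · rw [max_eq_left h]; linarith
    · rw [max_eq_right h]; exact le_trans (neg_le_abs x) hx
  rw [hid_eq_s15 D x hD hx, pi_norm_le_iff_of_nonneg hD0.le]
  intro i
  rw [Real.norm_eq_abs]
  cases t with
  | zero =>
    fin_cases i <;>
      simp only [H, cv0, cv1, cv2, cv3, cv4, cv5, cv6, cv7, cv8,
        cm0, cm1, cm2, cm3, cm4, cm5, cm6, cm7, cm8]
    · rw [abs_of_nonneg (le_max_left 0 x)]; exact habs2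
    · rw [abs_of_nonneg (le_max_left 0 (-x))]; exact habs3
    · rw [abs_zero]; linarith
    · rw [abs_zero]; linarith
    · rw [abs_of_nonneg (by positivity)]; linarith
    · rw [abs_zero]; linarith
    · rw [abs_of_nonneg (le_max_left 0 x)]; exact habs2
    · rw [abs_of_nonneg (le_max_left 0 (-x))]; exact habs3
    · rw [abs_of_nonneg (by positivity)]; linarith
  | succ t =>
    have hu := GG_mem hy t
    have hES0 := ES_nonneg hy t
    have hESle : ES t (|x|/D) ≤ 1 := le_trans (ES_le hy t) hy.2
    have hm : 0 ⊔ (GG t (|x|/D) - 1/2) ∈ Set.Icc (0:ℝ) 1 :=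
      ⟨le_max_left _ _, max_le (by norm_num) (by linarith [hu.2])⟩
    fin_cases i <;>
      simp only [H, cv0, cv1, cv2, cv3, cv4, cv5, cv6, cv7, cv8,
        cm0, cm1, cm2, cm3, cm4, cm5, cm6, cm7, cm8]
    · rw [abs_of_nonneg (le_max_left 0 x)]; exact habs2
    · rw [abs_of_nonneg (le_max_left 0 (-x))]; exact habs3
    · rw [abs_of_nonneg (div_nonneg (mul_nonneg hD0.le hu.1) (by positivity))]
      exact bnd hD0 hu.1 hu.2 t
    · rw [abs_of_nonneg (div_nonneg (mul_nonneg hD0.le hm.1) (by positivity))]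
      exact bnd hD0 hm.1 hm.2 t
    · rw [abs_of_nonneg (by positivity),
        show D/2/4^(t+1) = D * (1/2) / 4^(t+1) from by ring]
      exact bnd hD0 (by norm_num) (by norm_num) (t+1)
    · rw [abs_of_nonneg (mul_nonneg hD0.le hES0)]
      calc D * ES t (|x|/D) ≤ D * 1 := mul_le_mul_of_nonneg_left hESle hD0.le
        _ = D := mul_one D
    · rw [abs_zero]; linarith
    · rw [abs_zero]; linarith
    · rw [abs_of_nonneg (by positivity)]; linarith

/-- Lemma (squaring together with identity): for `D ≥ 1` there is an RNN with input
dimension 1, output dimension 2, and hidden state size 9 such that for all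
`x ∈ [−D, D]` and `t ∈ ℕ₀`: `|((R 𝒟 x)[t])₁ − x²| ≤ (D²/2)·4^{−t}`,
`((R 𝒟 x)[t])₂ = x`, `‖(K 𝒟 x)[t]‖∞ ≤ D`, and `‖(R 𝒟 x)[t]‖∞ ≤ D²`. -/
theorem stmt15 (D : ℝ) (hD : 1 ≤ D) :
    ∃ R : RNN (Fin 1) (Fin 9) (Fin 2),
      ∀ x : ℝ, x ∈ Set.Icc (-D) D → ∀ t : ℕ,
        |R.out (fun _ => x) t 0 - x ^ 2| ≤ D ^ 2 / 2 * (4 : ℝ) ^ (-(t : ℤ)) ∧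
        R.out (fun _ => x) t 1 = x ∧
        ‖R.hid (fun _ => x) t‖ ≤ D ∧ ‖R.out (fun _ => x) t‖ ≤ D ^ 2 := by
  refine ⟨myR D, fun x hx t => ?_⟩
  have hD0 : (0:ℝ) < D := by linarith
  have hxD : |x| ≤ D := abs_le.mpr ⟨hx.1, hx.2⟩
  have hy : |x|/D ∈ Set.Icc (0:ℝ) 1 :=
    ⟨by positivity, by rw [div_le_one hD0]; exact hxD⟩
  have hkey := key hy t
  have hu := GG_mem hy t
  have hES0 := ES_nonneg hy t
  have hESle := ES_le hy t
  obtain ⟨ho0, ho1⟩ := out_eq_s15 D x hD hxD t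
  have hxsq : D^2 * (|x|/D)^2 = x^2 := by
    rw [div_pow, sq_abs]
    field_simp
  have hzpow : (4:ℝ) ^ (-(t:ℤ)) = (4^t)⁻¹ := by
    rw [zpow_neg, zpow_natCast]
  have h4p : (0:ℝ) < 4^t := by positivity
  refine ⟨?_, ho1, hid_norm D x hD hxD t, ?_⟩
  · rw [ho0]
    have hdiff : D^2 * (|x|/D - ES t (|x|/D)) - x^2
        = D^2 * (GG t (|x|/D) * (1 - GG t (|x|/D)) / 4^t) := by
      rw [← hxsq]
      linear_combination (D^2) * hkey
    rw [hdiff, hzpow,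
      abs_of_nonneg (mul_nonneg (by positivity)
        (div_nonneg (mul_nonneg hu.1 (by linarith [hu.2])) h4p.le))]
    rw [show D^2/2 * ((4:ℝ)^t)⁻¹ = D^2 * ((1/2) / 4^t) from by ring]
    have hP : GG t (|x|/D) * (1 - GG t (|x|/D)) ≤ 1/2 := by nlinarith [hu.1, hu.2]
    gcongr
  · rw [pi_norm_le_iff_of_nonneg (by positivity)]
    intro i
    rw [Real.norm_eq_abs]
    fin_cases i
    · show |(myR D).out (fun _ => x) t 0| ≤ D^2
      rw [ho0, abs_of_nonneg (mul_nonneg (by positivity) (by linarith))]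
      have h1 : |x|/D - ES t (|x|/D) ≤ 1 := by linarith [hy.2]
      nlinarith
    · show |(myR D).out (fun _ => x) t 1| ≤ D^2
      rw [ho1]
      calc |x| ≤ D := hxD
        _ ≤ D^2 := by nlinarith
end
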